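/- Let X and Y be Banach spaces and 1 ≤ p < ∞. If the closed unit ball of X ⊕_p Y has a nonzero semi SCS point (x, y), then either B_X or B_Y admits convex combinations of slices of arbitrarily small diameter (i.e., X or Y has the BSCSP). -/

import Mathlib

/-- A point `x₀` of the closed unit ball of `Z` is a *semi SCS point* of `B_Z` if for every
`ε > 0` there exist finitely many slices `Sᵢ = {z ∈ B_Z : fᵢ z > ‖fᵢ‖ - δᵢ}` of `B_Z` and convex
weights `λᵢ ≥ 0`, `Σ λᵢ = 1`, such that the convex combination `Σ λᵢ Sᵢ` is contained in
`B(x₀, ε)`. -/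
def IsSemiSCSPointOfBall {Z : Type*} [NormedAddCommGroup Z] [NormedSpace ℝ Z] (x : Z) : Prop :=
  ‖x‖ ≤ 1 ∧ ∀ ε > (0 : ℝ), ∃ (n : ℕ) (lam : Fin n → ℝ) (f : Fin n → (Z →L[ℝ] ℝ))
    (δ : Fin n → ℝ), (∀ i, 0 ≤ lam i) ∧ (∑ i, lam i) = 1 ∧ (∀ i, 0 < δ i) ∧
    ∀ z : Fin n → Z, (∀ i, ‖z i‖ ≤ 1 ∧ f i (z i) > ‖f i‖ - δ i) →
      (∑ i, lam i • z i) ∈ Metric.closedBall x ε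

/-- A Banach space `X` has the *Ball Small Combination of Slices Property* (BSCSP) if `B_X`
contains convex combinations of slices of arbitrarily small diameter. -/
def BSCSP (X : Type*) [NormedAddCommGroup X] [NormedSpace ℝ X] : Prop :=
  ∀ ε > (0 : ℝ), ∃ (n : ℕ) (lam : Fin n → ℝ) (f : Fin n → (X →L[ℝ] ℝ)) (δ : Fin n → ℝ),
    (∀ i, 0 ≤ lam i) ∧ (∑ i, lam i) = 1 ∧ (∀ i, 0 < δ i) ∧
    Metric.diam {w : X | ∃ z : Fin n → X,
      (∀ i, ‖z i‖ ≤ 1 ∧ f i (z i) > ‖f i‖ - δ i) ∧ w = ∑ i, lam i • z i} ≤ ε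

/-- Every slice of the closed unit ball is nonempty: there is a point of the ball where the
functional is within `θ` of its norm. -/
lemma exists_slice_witness {Z : Type*} [NormedAddCommGroup Z] [NormedSpace ℝ Z]
    (F : Z →L[ℝ] ℝ) {θ : ℝ} (hθ : 0 < θ) :
    ∃ w : Z, ‖w‖ ≤ 1 ∧ F w > ‖F‖ - θ := by
  rcases lt_or_ge (‖F‖ - θ) 0 with hneg | hpos
  · exact ⟨0, by simp, by simpa using hneg⟩
  · have hlt : ‖F‖ - θ < ‖F‖ := by linarith
    obtain ⟨w, hw, hFw⟩ := F.exists_lt_apply_of_lt_opNorm hlt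
    rcases le_or_gt 0 (F w) with h0 | h0
    · exact ⟨w, hw.le, by rwa [Real.norm_eq_abs, abs_of_nonneg h0] at hFw⟩
    · refine ⟨-w, by simpa using hw.le, ?_⟩
      rw [map_neg]
      rwa [Real.norm_eq_abs, abs_of_neg h0] at hFw

/-- Abstract form of the main argument.  If `Z` contains `X` via a norm-nonincreasing
inclusion `J` with norm-nonincreasing left inverse `P` satisfying the "absoluteness"
property `hmix`, and `z₀` is a semi SCS point of `B_Z` with `P z₀ ≠ 0`, then `X` has
the BSCSP. -/
lemma bscsp_of_semiSCS_aux {Z X : Type*}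
    [NormedAddCommGroup Z] [NormedSpace ℝ Z]
    [NormedAddCommGroup X] [NormedSpace ℝ X]
    (J : X →L[ℝ] Z) (P : Z →L[ℝ] X)
    (hPJ : ∀ u, P (J u) = u)
    (hPle : ∀ z, ‖P z‖ ≤ ‖z‖)
    (hmix : ∀ (w : Z) (u : X), ‖u‖ ≤ 1 → ‖J (‖P w‖ • u) + (w - J (P w))‖ ≤ ‖w‖)
    {z₀ : Z} (h : IsSemiSCSPointOfBall z₀) (hx₀ : P z₀ ≠ 0) :
    BSCSP X := by
  set r := ‖P z₀‖ with hrdef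
  have hr0 : 0 < r := norm_pos_iff.mpr hx₀
  intro ε hε
  set ε' := min (r / 2) (ε * r / 8) with hε'def
  have hε'0 : 0 < ε' := lt_min (by positivity) (by positivity)
  have hε'r : ε' ≤ r / 2 := min_le_left _ _
  have hε'ε : ε' ≤ ε * r / 8 := min_le_right _ _
  obtain ⟨n, lam, F, δ, hlam, hsum, hδ, hsl⟩ := h.2 ε' hε'0
  choose w hw1 hw2 using fun i => exists_slice_witness (F i) (half_pos (hδ i))
  set f : Fin n → (X →L[ℝ] ℝ) := fun i => (F i).comp J with hfdef
  set α : Fin n → ℝ := fun i => ‖P (w i)‖ with hαdef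
  have hα0 : ∀ i, 0 ≤ α i := fun i => norm_nonneg _
  have hα1 : ∀ i, α i ≤ 1 := fun i => (hPle _).trans (hw1 i)
  -- the key estimate
  have key : ∀ u : Fin n → X, (∀ i, ‖u i‖ ≤ 1 ∧ f i (u i) > ‖f i‖ - δ i / 2) →
      ‖(∑ i, (lam i * α i) • u i) - P z₀‖ ≤ ε' := by
    intro u hu
    set z : Fin n → Z := fun i => J (‖P (w i)‖ • u i) + (w i - J (P (w i))) with hzdef
    have hzmem : ∀ i, ‖z i‖ ≤ 1 ∧ F i (z i) > ‖F i‖ - δ i := by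
      intro i
      refine ⟨(hmix (w i) (u i) (hu i).1).trans (hw1 i), ?_⟩
      have h1 : F i (z i) = α i * f i (u i) + (F i (w i) - f i (P (w i))) := by
        simp only [hzdef, map_add, map_sub, map_smul, smul_eq_mul, hfdef, hαdef,
          ContinuousLinearMap.comp_apply]
      have h2 : f i (P (w i)) ≤ ‖f i‖ * α i := by
        have := (f i).le_opNorm (P (w i))
        have h3 : f i (P (w i)) ≤ ‖f i (P (w i))‖ := le_abs_self _
        simpa [hαdef] using h3.trans this
      have h4 : α i * (‖f i‖ - δ i / 2) ≤ α i * f i (u i) :=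
        mul_le_mul_of_nonneg_left (hu i).2.le (hα0 i)
      have h5 := hw2 i
      have h6 := hδ i
      have h7 := hα1 i
      have h8 := hα0 i
      nlinarith
    have hmem := hsl z hzmem
    rw [Metric.mem_closedBall, dist_eq_norm] at hmem
    have hPz : P (∑ i, lam i • z i) = ∑ i, (lam i * α i) • u i := by
      rw [map_sum]
      refine Finset.sum_congr rfl fun i _ => ?_
      have : P (z i) = α i • u i := by
        simp [hzdef, map_add, map_sub, map_smul, hPJ, hαdef]
      rw [map_smul, this, smul_smul]
    calc ‖(∑ i, (lam i * α i) • u i) - P z₀‖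
        = ‖P (∑ i, lam i • z i - z₀)‖ := by rw [map_sub, hPz]
      _ ≤ ‖∑ i, lam i • z i - z₀‖ := hPle _
      _ ≤ ε' := hmem
  -- the total weight `c` is bounded below
  choose u₀ hu₀1 hu₀2 using fun i => exists_slice_witness (f i) (half_pos (hδ i))
  set c := ∑ i, lam i * α i with hcdef
  have hkey₀ := key u₀ (fun i => ⟨hu₀1 i, hu₀2 i⟩)
  have hc_le : ‖∑ i, (lam i * α i) • u₀ i‖ ≤ c := by
    refine (norm_sum_le _ _).trans ?_
    refine Finset.sum_le_sum fun i _ => ?_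
    rw [norm_smul, Real.norm_eq_abs, abs_of_nonneg (mul_nonneg (hlam i) (hα0 i))]
    nlinarith [hu₀1 i, mul_nonneg (hlam i) (hα0 i)]
  have hrc : r - ε' ≤ c := by
    have h9 : r ≤ ‖∑ i, (lam i * α i) • u₀ i‖ + ε' := by
      have := norm_sub_norm_le (∑ i, (lam i * α i) • u₀ i) (P z₀)
      have h10 : ‖P z₀‖ - ‖∑ i, (lam i * α i) • u₀ i‖ ≤ ε' := by
        have := norm_sub_norm_le (P z₀) (∑ i, (lam i * α i) • u₀ i)
        rw [← norm_neg (P z₀ - _)] at this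
        simp only [neg_sub] at this
        linarith [this.trans hkey₀]
      linarith
    linarith [hc_le]
  have hc0 : 0 < c := by linarith
  -- construct the convex combination of slices of `B_X`
  refine ⟨n, fun i => lam i * α i / c, f, fun i => δ i / 2,
    fun i => div_nonneg (mul_nonneg (hlam i) (hα0 i)) hc0.le,
    by rw [← Finset.sum_div, ← hcdef, div_self hc0.ne'],
    fun i => half_pos (hδ i), ?_⟩
  apply Metric.diam_le_of_forall_dist_le hε.le
  rintro w₁ ⟨u, hu, rfl⟩ w₂ ⟨v, hv, rfl⟩
  have e : ∀ u : Fin n → X,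
      (∑ i, (lam i * α i / c) • u i) = c⁻¹ • ∑ i, (lam i * α i) • u i := by
    intro u
    rw [Finset.smul_sum]
    refine Finset.sum_congr rfl fun i _ => ?_
    rw [smul_smul, div_eq_inv_mul]
  have h₁ := key u hu
  have h₂ := key v hv
  rw [dist_eq_norm, e, e, ← smul_sub, norm_smul, Real.norm_eq_abs,
    abs_of_pos (inv_pos.mpr hc0)]
  have hAB : ‖(∑ i, (lam i * α i) • u i) - ∑ i, (lam i * α i) • v i‖ ≤ 2 * ε' := by
    have : (∑ i, (lam i * α i) • u i) - ∑ i, (lam i * α i) • v i =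
        ((∑ i, (lam i * α i) • u i) - P z₀) - ((∑ i, (lam i * α i) • v i) - P z₀) := by
      abel
    rw [this]
    calc ‖_ - _‖ ≤ ‖(∑ i, (lam i * α i) • u i) - P z₀‖ +
          ‖(∑ i, (lam i * α i) • v i) - P z₀‖ := norm_sub_le _ _
      _ ≤ 2 * ε' := by linarith
  rw [inv_mul_le_iff₀ hc0]
  nlinarith [norm_nonneg ((∑ i, (lam i * α i) • u i) - ∑ i, (lam i * α i) • v i)]

/-- Monotonicity of the `L^p` product norm in the norms of the components. -/
lemma withLp_norm_mono (p : ENNReal) [Fact (1 ≤ p)] (hp : p ≠ ⊤) {α β : Type*}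
    [NormedAddCommGroup α] [NormedAddCommGroup β] {a a' : α} {b b' : β}
    (ha : ‖a'‖ ≤ ‖a‖) (hb : ‖b'‖ ≤ ‖b‖) :
    ‖(WithLp.equiv p (α × β)).symm (a', b')‖ ≤ ‖(WithLp.equiv p (α × β)).symm (a, b)‖ := by
  have ht : 0 < p.toReal :=
    ENNReal.toReal_pos (zero_lt_one.trans_le (Fact.out : (1 : ENNReal) ≤ p)).ne' hp
  rw [WithLp.prod_norm_eq_add ht, WithLp.prod_norm_eq_add ht]
  simp only [WithLp.equiv_symm_apply, WithLp.toLp_fst, WithLp.toLp_snd]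
  have h1 : ‖a'‖ ^ p.toReal ≤ ‖a‖ ^ p.toReal :=
    Real.rpow_le_rpow (norm_nonneg _) ha ht.le
  have h2 : ‖b'‖ ^ p.toReal ≤ ‖b‖ ^ p.toReal :=
    Real.rpow_le_rpow (norm_nonneg _) hb ht.le
  exact Real.rpow_le_rpow (by positivity) (by linarith) (by positivity)

/-- The norm of the first component is at most the `L^p` product norm. -/
lemma withLp_fst_norm_le (p : ENNReal) [Fact (1 ≤ p)] (hp : p ≠ ⊤) {α β : Type*}
    [NormedAddCommGroup α] [NormedAddCommGroup β] (z : WithLp p (α × β)) :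
    ‖z.fst‖ ≤ ‖z‖ := by
  have ht : 0 < p.toReal :=
    ENNReal.toReal_pos (zero_lt_one.trans_le (Fact.out : (1 : ENNReal) ≤ p)).ne' hp
  rw [WithLp.prod_norm_eq_add ht]
  have h1 : ‖z.fst‖ = (‖z.fst‖ ^ p.toReal) ^ (1 / p.toReal) := by
    rw [one_div, Real.rpow_rpow_inv (norm_nonneg _) ht.ne']
  conv_lhs => rw [h1]
  exact Real.rpow_le_rpow (by positivity) (le_add_of_nonneg_right (by positivity))
    (by positivity)

/-- The norm of the second component is at most the `L^p` product norm. -/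
lemma withLp_snd_norm_le (p : ENNReal) [Fact (1 ≤ p)] (hp : p ≠ ⊤) {α β : Type*}
    [NormedAddCommGroup α] [NormedAddCommGroup β] (z : WithLp p (α × β)) :
    ‖z.snd‖ ≤ ‖z‖ := by
  have ht : 0 < p.toReal :=
    ENNReal.toReal_pos (zero_lt_one.trans_le (Fact.out : (1 : ENNReal) ≤ p)).ne' hp
  rw [WithLp.prod_norm_eq_add ht]
  have h1 : ‖z.snd‖ = (‖z.snd‖ ^ p.toReal) ^ (1 / p.toReal) := by
    rw [one_div, Real.rpow_rpow_inv (norm_nonneg _) ht.ne']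
  conv_lhs => rw [h1]
  exact Real.rpow_le_rpow (by positivity) (le_add_of_nonneg_left (by positivity))
    (by positivity)

/-- For Banach spaces `X`, `Y` and `1 ≤ p < ∞`: if `B_{X ⊕_p Y}` has a nonzero semi SCS point
`(x, y)`, then `X` or `Y` has the BSCSP. -/
theorem bscsp_of_semiSCS_prod
    {X Y : Type*} [NormedAddCommGroup X] [NormedSpace ℝ X] [CompleteSpace X]
    [NormedAddCommGroup Y] [NormedSpace ℝ Y] [CompleteSpace Y]
    (p : ENNReal) [Fact (1 ≤ p)] (hp : p ≠ ⊤) (x : X) (y : Y) (hxy : ¬ (x = 0 ∧ y = 0))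
    (h : IsSemiSCSPointOfBall ((WithLp.equiv p (X × Y)).symm (x, y))) :
    BSCSP X ∨ BSCSP Y := by
  classical
  set E := WithLp.prodContinuousLinearEquiv p ℝ X Y with hE
  by_cases hx : x = 0
  · right
    have hy : y ≠ 0 := fun hy => hxy ⟨hx, hy⟩
    refine bscsp_of_semiSCS_aux
      (E.symm.toContinuousLinearMap.comp (ContinuousLinearMap.inr ℝ X Y))
      ((ContinuousLinearMap.snd ℝ X Y).comp E.toContinuousLinearMap)
      (fun u => rfl) (fun z => withLp_snd_norm_le p hp z) ?_ h hy
    intro w u hu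
    have hcomp : (E.symm.toContinuousLinearMap.comp (ContinuousLinearMap.inr ℝ X Y))
        (‖((ContinuousLinearMap.snd ℝ X Y).comp E.toContinuousLinearMap) w‖ • u) +
        (w - (E.symm.toContinuousLinearMap.comp (ContinuousLinearMap.inr ℝ X Y))
          (((ContinuousLinearMap.snd ℝ X Y).comp E.toContinuousLinearMap) w)) =
        (WithLp.equiv p (X × Y)).symm (w.fst, ‖w.snd‖ • u) := by
      apply (WithLp.equiv p (X × Y)).injective
      apply Prod.ext <;>
        simp [hE, ContinuousLinearMap.comp_apply, ContinuousLinearEquiv.coe_coe,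
          WithLp.prodContinuousLinearEquiv_apply, WithLp.prodContinuousLinearEquiv_symm_apply,
          WithLp.add_fst, WithLp.add_snd, WithLp.sub_fst, WithLp.sub_snd]
    rw [hcomp]
    have hw : w = (WithLp.equiv p (X × Y)).symm (w.fst, w.snd) := rfl
    have hle : ‖‖w.snd‖ • u‖ ≤ ‖w.snd‖ := by
      rw [norm_smul, Real.norm_eq_abs, abs_of_nonneg (norm_nonneg _)]
      nlinarith [norm_nonneg w.snd]
    calc ‖(WithLp.equiv p (X × Y)).symm (w.fst, ‖w.snd‖ • u)‖
        ≤ ‖(WithLp.equiv p (X × Y)).symm (w.fst, w.snd)‖ :=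
          withLp_norm_mono p hp le_rfl hle
      _ = ‖w‖ := by rw [← hw]
  · left
    refine bscsp_of_semiSCS_aux
      (E.symm.toContinuousLinearMap.comp (ContinuousLinearMap.inl ℝ X Y))
      ((ContinuousLinearMap.fst ℝ X Y).comp E.toContinuousLinearMap)
      (fun u => rfl) (fun z => withLp_fst_norm_le p hp z) ?_ h hx
    intro w u hu
    have hcomp : (E.symm.toContinuousLinearMap.comp (ContinuousLinearMap.inl ℝ X Y))
        (‖((ContinuousLinearMap.fst ℝ X Y).comp E.toContinuousLinearMap) w‖ • u) +
        (w - (E.symm.toContinuousLinearMap.comp (ContinuousLinearMap.inl ℝ X Y))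
          (((ContinuousLinearMap.fst ℝ X Y).comp E.toContinuousLinearMap) w)) =
        (WithLp.equiv p (X × Y)).symm (‖w.fst‖ • u, w.snd) := by
      apply (WithLp.equiv p (X × Y)).injective
      apply Prod.ext <;>
        simp [hE, ContinuousLinearMap.comp_apply, ContinuousLinearEquiv.coe_coe,
          WithLp.prodContinuousLinearEquiv_apply, WithLp.prodContinuousLinearEquiv_symm_apply,
          WithLp.add_fst, WithLp.add_snd, WithLp.sub_fst, WithLp.sub_snd]
    rw [hcomp]
    have hw : w = (WithLp.equiv p (X × Y)).symm (w.fst, w.snd) := rfl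
    have hle : ‖‖w.fst‖ • u‖ ≤ ‖w.fst‖ := by
      rw [norm_smul, Real.norm_eq_abs, abs_of_nonneg (norm_nonneg _)]
      nlinarith [norm_nonneg w.fst]
    calc ‖(WithLp.equiv p (X × Y)).symm (‖w.fst‖ • u, w.snd)‖
        ≤ ‖(WithLp.equiv p (X × Y)).symm (w.fst, w.snd)‖ :=
          withLp_norm_mono p hp hle le_rfl
      _ = ‖w‖ := by rw [← hw]
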